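/- Let f(t) = exp(-λ/t) for λ > 0. If 0 < x < y and λ/(x+y) > 2, then f(x) + f(y) ≤ f(x+y). -/
import Mathlib


/-- Let `f(t) = exp(-λ/t)` for `λ > 0`. If `0 < x < y` and `λ/(x+y) > 2`, then
`f(x) + f(y) ≤ f(x+y)`. -/
theorem stmt0 (lam x y : ℝ) (hlam : 0 < lam) (hx : 0 < x) (hxy : x < y)
    (h : lam / (x + y) > 2) :
    Real.exp (-lam / x) + Real.exp (-lam / y) ≤ Real.exp (-lam / (x + y)) := by
  have hy : 0 < y := hx.trans hxy
  have hs : 0 < x + y := by linarith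
  set u : ℝ := lam / x - lam / (x + y) with hu
  set v : ℝ := lam / y - lam / (x + y) with hv
  have hu0 : 0 < u := by
    have : lam / (x + y) < lam / x := by
      apply div_lt_div_of_pos_left hlam hx; linarith
    simp only [hu, hv]; linarith
  have hv0 : 0 < v := by
    have : lam / (x + y) < lam / y := by
      apply div_lt_div_of_pos_left hlam hy; linarith
    simp only [hu, hv]; linarith
  have huv : 1 ≤ u * v := by
    have huv' : u * v = (lam / (x + y)) ^ 2 := by
      rw [hu, hv]; field_simp; ring
    rw [huv']
    nlinarith [h]
  have h1 : Real.exp (-u) * (1 + u) ≤ 1 := by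
    have hexp := Real.add_one_le_exp u
    calc Real.exp (-u) * (1 + u) ≤ Real.exp (-u) * Real.exp u := by
          nlinarith [Real.exp_pos (-u)]
      _ = 1 := by rw [← Real.exp_add]; simp
  have h2 : Real.exp (-v) * (1 + v) ≤ 1 := by
    have hexp := Real.add_one_le_exp v
    calc Real.exp (-v) * (1 + v) ≤ Real.exp (-v) * Real.exp v := by
          nlinarith [Real.exp_pos (-v)]
      _ = 1 := by rw [← Real.exp_add]; simp
  have key : Real.exp (-u) + Real.exp (-v) ≤ 1 := by
    have hEu : Real.exp (-u) ≤ 1 / (1 + u) := by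
      rw [le_div_iff₀ (by linarith)]; exact h1
    have hEv : Real.exp (-v) ≤ 1 / (1 + v) := by
      rw [le_div_iff₀ (by linarith)]; exact h2
    have : 1 / (1 + u) + 1 / (1 + v) ≤ 1 := by
      rw [div_add_div _ _ (by linarith : (1:ℝ) + u ≠ 0) (by linarith : (1:ℝ) + v ≠ 0),
        div_le_one (by nlinarith)]
      nlinarith
    simp only [hu, hv]; linarith
  have hfx : -lam / x = -lam / (x + y) + -u := by
    rw [hu]; field_simp; ring
  have hfy : -lam / y = -lam / (x + y) + -v := by
    rw [hv]; field_simp; ring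
  rw [hfx, hfy, Real.exp_add, Real.exp_add]
  nlinarith [Real.exp_pos (-lam / (x + y)), key]
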